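/- Let E ⊂ ℝⁿ be a convex body symmetric about 0, V a subspace, and x₀ a point in the image of (1/2)E under orthogonal projection Q onto V⊥. Then the slice E ∩ (x₀ + V) has d-dimensional measure at least 2^{−d} · m_d(E ∩ V), where d = dim V. -/

import Mathlib

open MeasureTheory
open scoped ENNReal Pointwise

/-- Let `E ⊂ ℝⁿ` be a convex body symmetric about `0`, `V` a subspace of dimension `d`, and
`x₀` a point in the image of `(1/2) • E` under the orthogonal projection `Q` onto `Vᗮ`.
Then the slice `E ∩ (x₀ + V)` has `d`-dimensional measure at least `2⁻ᵈ * m_d(E ∩ V)`. -/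
theorem stmt3 (n d : ℕ)
    (E : Set (EuclideanSpace ℝ (Fin n)))
    (hconv : Convex ℝ E) (hbdd : Bornology.IsBounded E) (hne : (interior E).Nonempty)
    (hsymm : E = -E)
    (V : Submodule ℝ (EuclideanSpace ℝ (Fin n))) (hV : Module.finrank ℝ V = d)
    (x₀ : EuclideanSpace ℝ (Fin n))
    (hx₀ : x₀ ∈ (Vᗮ.subtypeL.comp (Submodule.orthogonalProjection Vᗮ)) '' ((2 : ℝ)⁻¹ • E)) :
    (2 : ℝ≥0∞)⁻¹ ^ d * μH[(d : ℝ)] (E ∩ (V : Set (EuclideanSpace ℝ (Fin n)))) ≤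
      μH[(d : ℝ)] (E ∩ ((x₀ + ·) '' (V : Set (EuclideanSpace ℝ (Fin n))))) := by
  obtain ⟨y, hyE, hy⟩ := hx₀
  -- y = 2⁻¹ • x₁ with x₁ ∈ E
  obtain ⟨x₁, hx₁, rfl⟩ := hyE
  set y : EuclideanSpace ℝ (Fin n) := (2:ℝ)⁻¹ • x₁ with hy_def
  have hyV : y - x₀ ∈ V := by
    have h1 : y - (Submodule.orthogonalProjection Vᗮ y : EuclideanSpace ℝ (Fin n)) ∈ Vᗮᗮ :=
      Submodule.sub_starProjection_mem_orthogonal (K := Vᗮ) y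
    rw [Submodule.orthogonal_orthogonal] at h1
    have hx0 : x₀ = (Submodule.orthogonalProjection Vᗮ y : EuclideanSpace ℝ (Fin n)) := hy.symm
    rwa [hx0]
  -- the image of E ∩ V under x ↦ y + 2⁻¹ • x is inside E ∩ (x₀ + V)
  have hsub : (y +ᵥ (2:ℝ)⁻¹ • (E ∩ (V : Set (EuclideanSpace ℝ (Fin n))))) ⊆
      E ∩ ((x₀ + ·) '' (V : Set (EuclideanSpace ℝ (Fin n)))) := by
    rintro _ ⟨_, ⟨x, ⟨hxE, hxV⟩, rfl⟩, rfl⟩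
    constructor
    · have := hconv hx₁ hxE (by norm_num : (0:ℝ) ≤ 2⁻¹) (by norm_num : (0:ℝ) ≤ 2⁻¹)
        (by norm_num)
      simpa [hy_def, vadd_eq_add] using this
    · refine ⟨(y - x₀) + (2:ℝ)⁻¹ • x, V.add_mem hyV (V.smul_mem _ hxV), ?_⟩
      simp [vadd_eq_add]
      abel
    -- membership in x₀ + V
  have hmeas : μH[(d:ℝ)] (y +ᵥ (2:ℝ)⁻¹ • (E ∩ (V : Set (EuclideanSpace ℝ (Fin n))))) =
      (2 : ℝ≥0∞)⁻¹ ^ d * μH[(d : ℝ)] (E ∩ (V : Set (EuclideanSpace ℝ (Fin n)))) := by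
    have h1 := MeasureTheory.hausdorffMeasure_vadd (d := (d:ℝ)) y
      (Or.inl (Nat.cast_nonneg d)) ((2:ℝ)⁻¹ • (E ∩ (V : Set (EuclideanSpace ℝ (Fin n)))))
    have h2 := Measure.hausdorffMeasure_smul₀ (𝕜 := ℝ) (d := (d:ℝ)) (Nat.cast_nonneg d)
      (r := (2:ℝ)⁻¹) (by norm_num) (E ∩ (V : Set (EuclideanSpace ℝ (Fin n))))
    rw [h1, h2]
    have h3 : ‖(2:ℝ)⁻¹‖₊ = (2 : NNReal)⁻¹ := by
      simp [nnnorm_inv]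
    rw [h3, NNReal.rpow_natCast, ENNReal.smul_def]
    congr 1
    push_cast
    simp
  calc (2 : ℝ≥0∞)⁻¹ ^ d * μH[(d : ℝ)] (E ∩ (V : Set (EuclideanSpace ℝ (Fin n))))
      = μH[(d:ℝ)] (y +ᵥ (2:ℝ)⁻¹ • (E ∩ (V : Set (EuclideanSpace ℝ (Fin n))))) := hmeas.symm
    _ ≤ _ := measure_mono hsub
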